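/- Let ω : ℝ with ω ≠ 0, let k₁ k₂ : ℕ and p q : ℝ, and define M : ℂ → ℂ for ξ ≠ 0 by M ξ = ξ ^ k₁ * (starRingEnd ℂ ξ) ^ k₂ * (‖ξ‖ ^ p : ℝ) * Complex.exp (Complex.I * q * Real.log ‖ξ‖). Then (for all t : ℝ and all ξ ≠ 0, M (Complex.exp (Complex.I * ω * t) * ξ) = Complex.exp (Complex.I * ω * t) * M ξ) if and only if k₁ = k₂ + 1. -/

import Mathlib

lemma norm_exp_I_mul (a : ℝ) : ‖Complex.exp (Complex.I * (a : ℂ))‖ = 1 := by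
  rw [Complex.norm_exp]
  simp

lemma conj_exp_I_mul (a : ℝ) :
    (starRingEnd ℂ) (Complex.exp (Complex.I * (a : ℂ)))
      = Complex.exp (-(Complex.I * (a : ℂ))) := by
  rw [← Complex.exp_conj]
  congr 1
  simp

/-- Resonance characterization: under the rotational flow `ξ ↦ e^{iωt}ξ` with
`ω ≠ 0`, the generalized monomial `ξ^{k₁} ξ̄^{k₂} |ξ|^{p} e^{i q log|ξ|}`
transforms exactly like `ξ` itself iff `k₁ = k₂ + 1`. -/
theorem stmt_4 (ω : ℝ) (hω : ω ≠ 0) (k₁ k₂ : ℕ) (p q : ℝ) (M : ℂ → ℂ)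
    (hM : ∀ ξ : ℂ, ξ ≠ 0 →
      M ξ = ξ ^ k₁ * (starRingEnd ℂ ξ) ^ k₂ * ((‖ξ‖ ^ p : ℝ) : ℂ)
        * Complex.exp (Complex.I * (q : ℂ) * ((Real.log ‖ξ‖ : ℝ) : ℂ))) :
    (∀ (t : ℝ) (ξ : ℂ), ξ ≠ 0 →
        M (Complex.exp (Complex.I * (ω : ℂ) * (t : ℂ)) * ξ)
          = Complex.exp (Complex.I * (ω : ℂ) * (t : ℂ)) * M ξ)
      ↔ k₁ = k₂ + 1 := by
  constructor
  · intro h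
    by_contra hk
    -- set r := (k₁:ℝ) - k₂ - 1 ≠ 0
    have hr : ((k₁ : ℝ) - k₂ - 1) ≠ 0 := by
      intro h0
      apply hk
      have : (k₁ : ℝ) = (k₂ : ℝ) + 1 := by linarith
      exact_mod_cast this
    set r : ℝ := (k₁ : ℝ) - k₂ - 1 with hrdef
    set t : ℝ := Real.pi / (ω * r) with htdef
    have hωt : ω * t * r = Real.pi := by
      rw [htdef]; field_simp
    have h1 := h t 1 one_ne_zero
    have hM1 : M 1 = 1 := by
      rw [hM 1 one_ne_zero]; simp
    set c : ℂ := Complex.exp (Complex.I * (ω : ℂ) * (t : ℂ)) with hcdef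
    have hc : c = Complex.exp (Complex.I * ((ω * t : ℝ) : ℂ)) := by
      rw [hcdef]; ring_nf; push_cast; ring_nf
    have hcn : ‖c‖ = 1 := by rw [hc]; exact norm_exp_I_mul _
    have hc0 : c ≠ 0 := Complex.exp_ne_zero _
    have hMc : M c = c ^ k₁ * Complex.exp (-(Complex.I * ((ω * t : ℝ) : ℂ))) ^ k₂ := by
      rw [hM c hc0, hcn, hc, conj_exp_I_mul]
      norm_num
    rw [mul_one] at h1
    rw [hMc, hM1, mul_one] at h1
    -- h1 : c ^ k₁ * exp(-(I*ωt))^k₂ = c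
    have key : Complex.exp (Complex.I * ((ω * t : ℝ) : ℂ) * (((k₁ : ℂ) - k₂) - 1)) = 1 := by
      have e1 : c ^ k₁ = Complex.exp ((k₁ : ℂ) * (Complex.I * ((ω * t : ℝ) : ℂ))) := by
        rw [hc, Complex.exp_nat_mul]
      have e2 : Complex.exp (-(Complex.I * ((ω * t : ℝ) : ℂ))) ^ k₂
          = Complex.exp ((k₂ : ℂ) * (-(Complex.I * ((ω * t : ℝ) : ℂ)))) := by
        rw [Complex.exp_nat_mul]
      rw [e1, e2, ← Complex.exp_add, hc] at h1
      have h2 : Complex.exp ((↑k₁ * (Complex.I * ((ω * t : ℝ) : ℂ)) + ↑k₂ * -(Complex.I * ((ω * t : ℝ) : ℂ))) - Complex.I * ((ω * t : ℝ) : ℂ)) = 1 := by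
        rw [Complex.exp_sub, h1, div_self (Complex.exp_ne_zero _)]
      have hAB : Complex.I * ((ω * t : ℝ) : ℂ) * (((k₁ : ℂ) - k₂) - 1)
          = ↑k₁ * (Complex.I * ((ω * t : ℝ) : ℂ)) + ↑k₂ * -(Complex.I * ((ω * t : ℝ) : ℂ))
            - Complex.I * ((ω * t : ℝ) : ℂ) := by ring
      rw [hAB]
      exact h2
    have : Complex.exp (Complex.I * Real.pi) = 1 := by
      rw [← key]
      congr 1
      have : ((ω * t : ℝ) : ℂ) * (((k₁ : ℂ) - k₂) - 1) = ((ω * t * r : ℝ) : ℂ) := by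
        push_cast [hrdef]; ring
      rw [mul_assoc, this, hωt]
    rw [mul_comm, Complex.exp_pi_mul_I] at this
    norm_num at this
  · intro hk t ξ hξ
    subst hk
    set c : ℂ := Complex.exp (Complex.I * (ω : ℂ) * (t : ℂ)) with hcdef
    have hc : c = Complex.exp (Complex.I * ((ω * t : ℝ) : ℂ)) := by
      rw [hcdef]; push_cast; ring_nf
    have hcn : ‖c‖ = 1 := by rw [hc]; exact norm_exp_I_mul _
    have hc0 : c ≠ 0 := Complex.exp_ne_zero _
    have hnorm : ‖c * ξ‖ = ‖ξ‖ := by rw [norm_mul, hcn, one_mul]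
    rw [hM _ (mul_ne_zero hc0 hξ), hM ξ hξ, hnorm]
    have hconj : (starRingEnd ℂ) c = c⁻¹ := by
      rw [hc, conj_exp_I_mul, ← Complex.exp_neg]
    rw [map_mul, mul_pow, mul_pow, hconj]
    have hcc : c ^ (k₂ + 1) * (c⁻¹) ^ k₂ = c := by
      rw [pow_succ, mul_right_comm, ← mul_pow, mul_inv_cancel₀ hc0, one_pow, one_mul]
    calc c ^ (k₂ + 1) * ξ ^ (k₂ + 1) * ((c⁻¹) ^ k₂ * (starRingEnd ℂ ξ) ^ k₂)
          * ((‖ξ‖ ^ p : ℝ) : ℂ) * Complex.exp (Complex.I * (q : ℂ) * ((Real.log ‖ξ‖ : ℝ) : ℂ))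
        = (c ^ (k₂ + 1) * (c⁻¹) ^ k₂) * (ξ ^ (k₂ + 1) * (starRingEnd ℂ ξ) ^ k₂
          * ((‖ξ‖ ^ p : ℝ) : ℂ) * Complex.exp (Complex.I * (q : ℂ) * ((Real.log ‖ξ‖ : ℝ) : ℂ))) := by ring
      _ = _ := by rw [hcc]
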